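/- For δ > 0 and r ≥ 1, the limit as s → ∞ of (1/s)·Σ_{i=1}^{⌈δsr⌉−1} log_q(1 + (s−1)/i) equals δr·log_q(1 + 1/(δr)) + log_q(1 + δr). -/

import Mathlib

open Filter Real Topology

noncomputable def phiAux (n : ℕ) : ℝ := Real.log n.factorial - n * Real.log n + n

lemma aux_h_tendsto : Tendsto
    (fun n : ℕ => phiAux n / n) atTop (𝓝 0) := by
  have h1 : Tendsto (fun n : ℕ => Real.log (Stirling.stirlingSeq n) / n) atTop (𝓝 0) := by
    have : Tendsto (fun n : ℕ => Real.log (Stirling.stirlingSeq n)) atTop (𝓝 (Real.log (√π))) :=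
      ((Real.continuousAt_log (by positivity)).tendsto.comp Stirling.tendsto_stirlingSeq_sqrt_pi)
    exact this.div_atTop tendsto_natCast_atTop_atTop
  have h2 : Tendsto (fun n : ℕ => (1/2) * Real.log (2 * n) / n) atTop (𝓝 0) := by
    have hx : Tendsto (fun x : ℝ => Real.log x / x) atTop (𝓝 0) :=
      Real.isLittleO_log_id_atTop.tendsto_div_nhds_zero
    have hc : Tendsto (fun n : ℕ => (2 : ℝ) * n) atTop atTop :=
      tendsto_natCast_atTop_atTop.const_mul_atTop (by norm_num)
    have h3 : Tendsto (fun n : ℕ => Real.log (2 * n) / (2 * n)) atTop (𝓝 0) := hx.comp hc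
    have heq : ∀ᶠ n : ℕ in atTop, Real.log (2 * (n:ℝ)) / (2 * n) = (1/2) * Real.log (2*n) / n := by
      filter_upwards [eventually_ge_atTop 1] with n hn
      have : (n:ℝ) ≠ 0 := Nat.cast_ne_zero.mpr (by omega)
      field_simp
    exact h3.congr' heq
  have key := h1.add h2
  rw [add_zero] at key
  refine key.congr' ?_
  filter_upwards [eventually_ge_atTop 1] with n hn
  have hn0 : (n:ℝ) ≠ 0 := Nat.cast_ne_zero.mpr (by omega)
  have hf := Stirling.log_stirlingSeq_formula n
  rw [Real.log_div (by positivity) (by positivity), Real.log_exp] at hf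
  simp only [phiAux]
  rw [hf]
  field_simp
  ring

lemma aux_sum_log (m : ℕ) : ∀ N : ℕ,
    ∑ i ∈ Finset.Icc 1 N, (Real.log ((i : ℝ) + m) - Real.log i)
      = Real.log ((N + m).factorial) - Real.log (m.factorial) - Real.log (N.factorial) := by
  intro N
  induction N with
  | zero => simp
  | succ n ih =>
      rw [Finset.sum_Icc_succ_top (by omega), ih]
      have h1 : ((n + 1 + m).factorial) = (n + 1 + m) * (n + m).factorial := by
        rw [show n + 1 + m = (n + m) + 1 by ring, Nat.factorial_succ]
      have h2 : ((n + 1).factorial) = (n + 1) * n.factorial := Nat.factorial_succ n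
      rw [h1, h2]
      push_cast
      rw [Real.log_mul (by positivity) (by positivity), Real.log_mul (by positivity)
        (by exact_mod_cast Nat.cast_ne_zero.mpr n.factorial_ne_zero)]
      ring

theorem stmt_16 (q : ℝ) (hq : 1 < q) (δ : ℝ) (hδ : 0 < δ) (r : ℕ) (hr : 1 ≤ r) :
    Tendsto (fun s : ℕ =>
        (1 / (s : ℝ)) * ∑ i ∈ Finset.Icc 1 (⌈δ * s * r⌉₊ - 1),
          Real.log (1 + ((s : ℝ) - 1) / (i : ℝ)) / Real.log q)
      atTop
      (nhds (δ * r * (Real.log (1 + 1 / (δ * r)) / Real.log q)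
        + Real.log (1 + δ * r) / Real.log q)) := by
  have hr1 : (1:ℝ) ≤ (r:ℝ) := by exact_mod_cast hr
  have ha : 0 < δ * (r:ℝ) := mul_pos hδ (lt_of_lt_of_le one_pos hr1)
  set a : ℝ := δ * r with ha_def
  have hlogq : Real.log q ≠ 0 := ne_of_gt (Real.log_pos hq)
  set N : ℕ → ℕ := fun s => ⌈δ * (s:ℝ) * r⌉₊ - 1 with hN_def
  set sm : ℕ → ℕ := fun s => s - 1 with hsm_def
  set M : ℕ → ℕ := fun s => N s + sm s with hM_def
  -- δ * s * r tends to infinity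
  have hast : Tendsto (fun s : ℕ => δ * (s:ℝ) * r) atTop atTop := by
    have := tendsto_natCast_atTop_atTop (R := ℝ) |>.const_mul_atTop ha
    refine this.congr fun s => by ring
  have hceil2 : ∀ᶠ s : ℕ in atTop, 2 ≤ ⌈δ * (s:ℝ) * r⌉₊ := by
    filter_upwards [hast.eventually_ge_atTop 2] with s hs
    calc (2:ℕ) = ⌈(2:ℝ)⌉₊ := by simp
    _ ≤ ⌈δ * (s:ℝ) * r⌉₊ := Nat.ceil_mono hs
  -- basic eventual cast facts
  have hNcast : ∀ᶠ s : ℕ in atTop, ((N s : ℕ):ℝ) = (⌈δ * (s:ℝ) * r⌉₊ : ℝ) - 1 := by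
    filter_upwards [hceil2] with s hs
    simp only [hN_def]
    push_cast [Nat.cast_sub (by omega : 1 ≤ ⌈δ * (s:ℝ) * r⌉₊)]
    ring
  -- z = N/s → a
  have hz : Tendsto (fun s : ℕ => ((N s : ℕ):ℝ) / s) atTop (𝓝 a) := by
    have hlow : Tendsto (fun s : ℕ => a - 1 / (s:ℝ)) atTop (𝓝 a) := by
      simpa using (tendsto_const_nhds : Tendsto (fun _ : ℕ => a) atTop (𝓝 a)).sub (tendsto_one_div_atTop_nhds_zero_nat)
    refine tendsto_of_tendsto_of_tendsto_of_le_of_le' hlow tendsto_const_nhds ?_ ?_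
    · filter_upwards [hNcast, eventually_ge_atTop 1] with s hs hs1
      have hspos : (0:ℝ) < s := by exact_mod_cast hs1
      rw [hs, sub_div]
      gcongr
      rw [le_div_iff₀ hspos]
      calc a * s = δ * (s:ℝ) * r := by rw [ha_def]; ring
      _ ≤ (⌈δ * (s:ℝ) * r⌉₊ : ℝ) := Nat.le_ceil _
    · filter_upwards [hNcast, eventually_ge_atTop 1] with s hs hs1
      have hspos : (0:ℝ) < s := by exact_mod_cast hs1
      rw [hs, div_le_iff₀ hspos]
      have := (Nat.ceil_lt_add_one (by positivity : (0:ℝ) ≤ δ * (s:ℝ) * r))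
      have h2 : δ * (s:ℝ) * r = a * s := by rw [ha_def]; ring
      linarith
  -- y = (s-1)/s → 1
  have hy : Tendsto (fun s : ℕ => ((sm s : ℕ):ℝ) / s) atTop (𝓝 1) := by
    have h1 : Tendsto (fun s : ℕ => 1 - 1 / (s:ℝ)) atTop (𝓝 1) := by
      simpa using (tendsto_const_nhds : Tendsto (fun _ : ℕ => (1:ℝ)) atTop (𝓝 1)).sub (tendsto_one_div_atTop_nhds_zero_nat)
    refine h1.congr' ?_
    filter_upwards [eventually_ge_atTop 1] with s hs1
    have hspos : (0:ℝ) < s := by exact_mod_cast hs1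
    simp only [hsm_def]
    push_cast [Nat.cast_sub hs1]
    field_simp
  -- x = M/s → a + 1
  have hx : Tendsto (fun s : ℕ => ((M s : ℕ):ℝ) / s) atTop (𝓝 (a + 1)) := by
    refine (hz.add hy).congr fun s => ?_
    simp only [hM_def]
    push_cast
    ring
  -- the index sequences tend to infinity
  have hsmtop : Tendsto sm atTop atTop := by
    refine tendsto_atTop_atTop.mpr fun b => ⟨b + 1, fun s hs => ?_⟩
    simp only [hsm_def]; omega
  have hNtop : Tendsto N atTop atTop := by
    rw [← tendsto_natCast_atTop_iff (R := ℝ)]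
    refine tendsto_atTop_mono' _ (f₁ := fun s : ℕ => a * s - 1) ?_ ?_
    · filter_upwards [hNcast] with s hs
      rw [hs]
      have h2 : δ * (s:ℝ) * r = a * s := by rw [ha_def]; ring
      have := Nat.le_ceil (δ * (s:ℝ) * r)
      linarith
    · refine tendsto_atTop_add_const_right _ _ ?_
      exact tendsto_natCast_atTop_atTop.const_mul_atTop ha
  have hMtop : Tendsto M atTop atTop := by
    refine tendsto_atTop_mono (fun s => ?_) hNtop
    simp only [hM_def]; omega
  -- E parts
  have hEpart : ∀ (n : ℕ → ℕ) (c : ℝ), Tendsto n atTop atTop →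
      Tendsto (fun s : ℕ => ((n s : ℕ):ℝ) / s) atTop (𝓝 c) →
      Tendsto (fun s : ℕ => phiAux (n s) / s) atTop (𝓝 0) := by
    intro n c hn hc
    have h1 := (aux_h_tendsto.comp hn).mul hc
    rw [zero_mul] at h1
    refine h1.congr' ?_
    filter_upwards [hn.eventually_ge_atTop 1, eventually_ge_atTop 1] with s hs1 hs2
    have hn0 : ((n s : ℕ):ℝ) ≠ 0 := by
      have : n s ≠ 0 := by omega
      exact_mod_cast this
    have hs0 : ((s:ℕ):ℝ) ≠ 0 := by exact_mod_cast (by omega : s ≠ 0)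
    field_simp
    rw [Function.comp_apply, div_mul_cancel₀ _ hn0]
  have hE : Tendsto (fun s : ℕ => (phiAux (M s) - phiAux (sm s) - phiAux (N s)) / s)
      atTop (𝓝 0) := by
    have := ((hEpart M (a+1) hMtop hx).sub (hEpart sm 1 hsmtop hy)).sub (hEpart N a hNtop hz)
    rw [sub_zero, sub_zero] at this
    refine this.congr fun s => by rw [sub_div, sub_div]
  -- main combined limit
  have hF : Tendsto (fun s : ℕ =>
      ((M s : ℕ):ℝ) / s * Real.log (((M s : ℕ):ℝ) / s)
      - ((sm s : ℕ):ℝ) / s * Real.log (((sm s : ℕ):ℝ) / s)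
      - ((N s : ℕ):ℝ) / s * Real.log (((N s : ℕ):ℝ) / s)
      + (phiAux (M s) - phiAux (sm s) - phiAux (N s)) / s) atTop
      (𝓝 ((a+1) * Real.log (a+1) - 1 * Real.log 1 - a * Real.log a + 0)) := by
    have cm := Real.continuous_mul_log.tendsto
    exact ((((cm (a+1)).comp hx).sub ((cm 1).comp hy)).sub ((cm a).comp hz)).add hE
  -- identify the limit value
  have hval : δ * r * (Real.log (1 + 1 / (δ * r)) / Real.log q) + Real.log (1 + δ * r) / Real.log q
      = ((a+1) * Real.log (a+1) - 1 * Real.log 1 - a * Real.log a + 0) / Real.log q := by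
    have h2 : Real.log (1 + 1/(δ*r)) = Real.log (a+1) - Real.log a := by
      rw [show (1:ℝ) + 1/(δ*r) = (a+1)/a by rw [ha_def]; field_simp,
        Real.log_div (by positivity) (ne_of_gt ha)]
    have h3 : Real.log (1 + δ*r) = Real.log (a+1) := by rw [← ha_def, add_comm]
    rw [h2, h3, Real.log_one, ← ha_def]
    field_simp
    ring
  rw [hval]
  -- eventual equality with F / log q
  refine (hF.div_const (Real.log q)).congr' ?_
  filter_upwards [hceil2, eventually_ge_atTop 2] with s hc2 hs2
  have hn1 : 1 ≤ N s := by simp only [hN_def]; omega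
  have ht1 : 1 ≤ sm s := by simp only [hsm_def]; omega
  have hm1 : 1 ≤ M s := by simp only [hM_def]; omega
  have hs0 : (0:ℝ) < (s:ℝ) := by exact_mod_cast (by omega : 0 < s)
  have hnp : (0:ℝ) < ((N s:ℕ):ℝ) := by exact_mod_cast hn1
  have htp : (0:ℝ) < ((sm s:ℕ):ℝ) := by exact_mod_cast ht1
  have hmp : (0:ℝ) < ((M s:ℕ):ℝ) := by exact_mod_cast hm1
  -- step A : transform the sum
  have hsum : ∑ i ∈ Finset.Icc 1 (⌈δ * (s:ℝ) * r⌉₊ - 1),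
      Real.log (1 + ((s:ℝ) - 1) / (i:ℝ)) / Real.log q
      = (Real.log (M s).factorial - Real.log (sm s).factorial
        - Real.log (N s).factorial) / Real.log q := by
    rw [← Finset.sum_div]
    congr 1
    have hal := aux_sum_log (sm s) (N s)
    have hMeq : (M s).factorial = (N s + sm s).factorial := by simp only [hM_def]
    rw [hMeq, ← hal]
    apply Finset.sum_congr rfl
    intro i hi
    have hi1 : 1 ≤ i := (Finset.mem_Icc.mp hi).1
    have hip : (0:ℝ) < (i:ℝ) := by exact_mod_cast hi1
    have hcast : (s:ℝ) - 1 = ((sm s:ℕ):ℝ) := by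
      simp only [hsm_def]
      push_cast [Nat.cast_sub (by omega : 1 ≤ s)]
      ring
    rw [hcast, show (1:ℝ) + ((sm s:ℕ):ℝ)/(i:ℝ) = ((i:ℝ) + ((sm s:ℕ):ℝ))/(i:ℝ) by field_simp,
      Real.log_div (by positivity) (ne_of_gt hip)]
  rw [hsum]
  -- step B : algebra
  have hlm : Real.log (((M s:ℕ):ℝ)/(s:ℝ)) = Real.log ((M s:ℕ):ℝ) - Real.log (s:ℝ) :=
    Real.log_div (ne_of_gt hmp) (ne_of_gt hs0)
  have hlt : Real.log (((sm s:ℕ):ℝ)/(s:ℝ)) = Real.log ((sm s:ℕ):ℝ) - Real.log (s:ℝ) :=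
    Real.log_div (ne_of_gt htp) (ne_of_gt hs0)
  have hln : Real.log (((N s:ℕ):ℝ)/(s:ℝ)) = Real.log ((N s:ℕ):ℝ) - Real.log (s:ℝ) :=
    Real.log_div (ne_of_gt hnp) (ne_of_gt hs0)
  have hmc : ((M s:ℕ):ℝ) = ((N s:ℕ):ℝ) + ((sm s:ℕ):ℝ) := by
    simp only [hM_def]; push_cast; ring
  simp only [phiAux]
  rw [hlm, hlt, hln, hmc]
  field_simp
  ring
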